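/- Let ε = (ε_{ij}) ∈ ℂ^{m×m} be a Hermitian matrix that is strictly diagonally dominant with real positive diagonal: ε_{ii} > Σ_{j≠i} |ε_{ij}| for all i. Let S_{ij} ∈ ℂ^{N×N} (1 ≤ i < j ≤ m) satisfy ‖S_{ij}‖₁ ≤ 1 and ‖S_{ij}‖_∞ ≤ 1, and form the mN×mN block matrix M with diagonal blocks M_{ii} Hermitian whose diagonal entries are ≥ ε_{ii} and whose off-diagonal entries vanish, and off-diagonal blocks M_{ij} = ε_{ij} S_{ij}, M_{ji} = M_{ij}†. Then M is strictly diagonally dominant with positive diagonal, hence Hermitian positive definite by Gershgorin's theorem. -/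

import Mathlib

open Matrix
open scoped ComplexOrder

/-- Maximum absolute row sum norm of a matrix. -/
noncomputable def rowSumNorm {α β : Type*} [Fintype α] [Fintype β]
    (M : Matrix α β ℂ) : ℝ :=
  ⨆ i : α, ∑ j : β, ‖M i j‖

/-- Maximum absolute column sum norm of a matrix. -/
noncomputable def colSumNorm {α β : Type*} [Fintype α] [Fintype β]
    (M : Matrix α β ℂ) : ℝ :=
  ⨆ j : β, ∑ i : α, ‖M i j‖

/-- If ε is Hermitian, strictly diagonally dominant with positive real diagonal, and the
blocks S_ij (i < j) have 1-norm and ∞-norm at most 1, then the block matrix M — with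
diagonal blocks real diagonal matrices whose entries are ≥ ε_ii, off-diagonal blocks
ε_ij S_ij and M_ji = M_ij† — is strictly diagonally dominant with positive diagonal,
hence Hermitian positive definite. -/
theorem block_SDD_HPD (m N : ℕ)
    (ε : Matrix (Fin m) (Fin m) ℂ) (hεherm : ε.IsHermitian)
    (hSDD : ∀ i, ∑ j ∈ Finset.univ.erase i, ‖ε i j‖ < (ε i i).re)
    (hpos : ∀ i, 0 < (ε i i).re)
    (S : Fin m → Fin m → Matrix (Fin N) (Fin N) ℂ)
    (hSnorm : ∀ i j : Fin m, i < j →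
      colSumNorm (S i j) ≤ 1 ∧ rowSumNorm (S i j) ≤ 1)
    (D : Fin m → Fin N → ℝ)
    (hD : ∀ i s, (ε i i).re ≤ D i s)
    (M : Matrix (Fin m × Fin N) (Fin m × Fin N) ℂ)
    (hMdef : ∀ p q, M p q =
      if p.1 = q.1 then (if p.2 = q.2 then ((D p.1 p.2 : ℝ) : ℂ) else 0)
      else if p.1 < q.1 then ε p.1 q.1 * S p.1 q.1 p.2 q.2
      else star (ε q.1 p.1 * S q.1 p.1 q.2 p.2)) :
    (∀ p, 0 < (M p p).re ∧
        ∑ q ∈ Finset.univ.erase p, ‖M p q‖ < (M p p).re) ∧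
      M.PosDef := by
  classical
  have habs : ∀ i j : Fin m, ‖ε j i‖ = ‖ε i j‖ := fun i j => by
    rw [← hεherm.apply i j, Complex.star_def, Complex.norm_conj]
  have hMdiag : ∀ p : Fin m × Fin N, M p p = ((D p.1 p.2 : ℝ) : ℂ) := fun p => by
    simp [hMdef p p]
  -- strict diagonal dominance of M
  have key : ∀ p : Fin m × Fin N,
      ∑ q ∈ Finset.univ.erase p, ‖M p q‖ < (M p p).re := by
    rintro ⟨i, s⟩
    set g : Fin m × Fin N → ℝ := fun q => if q.1 = i then 0 else ‖M (i, s) q‖ with hg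
    have hgnonneg : ∀ q, 0 ≤ g q := fun q => by
      by_cases h : q.1 = i <;> simp [hg, h, norm_nonneg]
    have hstep1 : ∑ q ∈ Finset.univ.erase (i, s), ‖M (i, s) q‖
        = ∑ q ∈ Finset.univ.erase (i, s), g q := by
      refine Finset.sum_congr rfl fun q hq => ?_
      by_cases h : q.1 = i
      · have hq2 : q.2 ≠ s := by
          intro h2
          exact (Finset.ne_of_mem_erase hq) (Prod.ext h h2)
        have hz : M (i, s) q = 0 := by
          rw [hMdef]; rw [if_pos h.symm, if_neg (Ne.symm hq2)]
        simp [hg, h, hz]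
      · simp [hg, h]
    have hstep2 : ∑ q ∈ Finset.univ.erase (i, s), g q ≤ ∑ q : Fin m × Fin N, g q :=
      Finset.sum_le_sum_of_subset_of_nonneg (Finset.erase_subset _ _)
        fun q _ _ => hgnonneg q
    have hinner : ∀ j : Fin m, j ≠ i → ∑ t : Fin N, g (j, t) ≤ ‖ε i j‖ := by
      intro j hji
      have hsum : ∑ t : Fin N, g (j, t) = ∑ t : Fin N, ‖M (i, s) (j, t)‖ := by
        refine Finset.sum_congr rfl fun t _ => ?_
        simp [hg, hji]
      rw [hsum]
      rcases lt_or_gt_of_ne (Ne.symm hji) with hij | hij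
      · -- i < j
        have hS := (hSnorm i j hij).2
        have hrow : ∑ t : Fin N, ‖S i j s t‖ ≤ rowSumNorm (S i j) :=
          le_ciSup (f := fun u : Fin N => ∑ t : Fin N, ‖S i j u t‖)
            (Set.Finite.bddAbove (Set.finite_range _)) s
        calc ∑ t : Fin N, ‖M (i, s) (j, t)‖
            = ∑ t : Fin N, ‖ε i j‖ * ‖S i j s t‖ := by
              refine Finset.sum_congr rfl fun t _ => ?_
              rw [hMdef (i, s) (j, t)]
              simp only [Ne.symm hji]  -- not needed maybe
              simp [hji.symm, hij, _root_.map_mul]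
          _ = ‖ε i j‖ * ∑ t : Fin N, ‖S i j s t‖ := by
              rw [Finset.mul_sum]
          _ ≤ ‖ε i j‖ * 1 := by
              refine mul_le_mul_of_nonneg_left (hrow.trans hS) (norm_nonneg _)
          _ = ‖ε i j‖ := mul_one _
      · -- j < i
        have hS := (hSnorm j i hij).1
        have hcol : ∑ t : Fin N, ‖S j i t s‖ ≤ colSumNorm (S j i) :=
          le_ciSup (f := fun u : Fin N => ∑ t : Fin N, ‖S j i t u‖)
            (Set.Finite.bddAbove (Set.finite_range _)) s
        calc ∑ t : Fin N, ‖M (i, s) (j, t)‖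
            = ∑ t : Fin N, ‖ε j i‖ * ‖S j i t s‖ := by
              refine Finset.sum_congr rfl fun t _ => ?_
              rw [hMdef (i, s) (j, t)]
              have hnotlt : ¬ (i < j) := not_lt.mpr hij.le
              simp [hji.symm, hnotlt, Complex.star_def, _root_.map_mul, Complex.norm_conj]
          _ = ‖ε j i‖ * ∑ t : Fin N, ‖S j i t s‖ := by
              rw [Finset.mul_sum]
          _ ≤ ‖ε j i‖ * 1 := by
              refine mul_le_mul_of_nonneg_left (hcol.trans hS) (norm_nonneg _)
          _ = ‖ε i j‖ := by rw [mul_one, habs]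
    have hstep3 : ∑ q : Fin m × Fin N, g q
        = ∑ j ∈ Finset.univ.erase i, ∑ t : Fin N, g (j, t) := by
      rw [Fintype.sum_prod_type]
      rw [Finset.sum_erase _ (by simp [hg])]
    have hstep4 : ∑ j ∈ Finset.univ.erase i, ∑ t : Fin N, g (j, t)
        ≤ ∑ j ∈ Finset.univ.erase i, ‖ε i j‖ :=
      Finset.sum_le_sum fun j hj => hinner j (Finset.ne_of_mem_erase hj)
    have hfin : (M (i, s) (i, s)).re = D i s := by
      rw [hMdiag (i, s)]; simp
    rw [hstep1, hfin]
    exact lt_of_le_of_lt (hstep2.trans (le_of_eq hstep3 |>.trans hstep4))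
      (lt_of_lt_of_le (hSDD i) (hD i s))
  have hdiagpos : ∀ p : Fin m × Fin N, 0 < (M p p).re := by
    intro p
    rw [hMdiag p]
    simpa using lt_of_lt_of_le (hpos p.1) (hD p.1 p.2)
  -- Hermitian
  have hherm : M.IsHermitian := by
    refine Matrix.IsHermitian.ext fun p q => ?_
    obtain ⟨a, u⟩ := p; obtain ⟨b, v⟩ := q
    rw [hMdef (b, v) (a, u), hMdef (a, u) (b, v)]
    rcases eq_or_ne a b with rfl | h
    · rcases eq_or_ne u v with rfl | h2
      · simp [Complex.star_def, Complex.conj_ofReal]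
      · simp [h2, Ne.symm h2]
    · rcases lt_or_gt_of_ne h with hlt | hlt
      · simp [h, Ne.symm h, hlt, asymm hlt]
      · have hba : b < a := hlt
        simp [h, Ne.symm h, hba, asymm hba]
  -- eigenvalues are positive by Gershgorin
  have hev : ∀ j, 0 < hherm.eigenvalues j := by
    intro j
    have hb := hherm.mulVec_eigenvectorBasis j
    have hvne : ⇑(hherm.eigenvectorBasis j) ≠ 0 := by
      have := hherm.eigenvectorBasis.toBasis.ne_zero j
      simpa using fun hh => this (by simpa using hh)
    have hμ : Module.End.HasEigenvalue (Matrix.toLin' M)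
        ((hherm.eigenvalues j : ℂ)) := by
      refine Module.End.hasEigenvalue_of_hasEigenvector ⟨?_, hvne⟩
      rw [Module.End.mem_eigenspace_iff, Matrix.toLin'_apply, hb]
      ext t
      simp [Complex.real_smul]
    obtain ⟨k, hk⟩ := eigenvalue_mem_ball hμ
    rw [Metric.mem_closedBall, dist_eq_norm] at hk
    have hre : |hherm.eigenvalues j - (M k k).re|
        ≤ ‖((hherm.eigenvalues j : ℂ)) - M k k‖ := by
      have := Complex.abs_re_le_norm (((hherm.eigenvalues j : ℂ)) - M k k)
      simpa using this
    have hrad : ∑ q ∈ Finset.univ.erase k, ‖M k q‖ < (M k k).re := by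
      simpa using key k
    have h1 : |hherm.eigenvalues j - (M k k).re| < (M k k).re :=
      lt_of_le_of_lt (hre.trans hk) hrad
    have := abs_lt.mp h1
    linarith [this.1]
  have hpsd : M.PosSemidef :=
    hherm.posSemidef_iff_eigenvalues_nonneg.mpr fun j => (hev j).le
  have hdet : M.det ≠ 0 := by
    rw [hherm.det_eq_prod_eigenvalues]
    refine Finset.prod_ne_zero_iff.mpr fun j _ => ?_
    exact Complex.ofReal_ne_zero.mpr (ne_of_gt (hev j))
  refine ⟨fun p => ⟨hdiagpos p, key p⟩, Matrix.PosDef.of_dotProduct_mulVec_pos hherm fun x hx => ?_⟩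
  have h0 : 0 ≤ star x ⬝ᵥ M *ᵥ x := hpsd.dotProduct_mulVec_nonneg x
  refine lt_of_le_of_ne h0 fun heq => ?_
  have hz : M *ᵥ x = 0 :=
    (hpsd.dotProduct_mulVec_zero_iff x).mp heq.symm
  exact hdet ((Matrix.exists_mulVec_eq_zero_iff).mp ⟨x, hx, hz⟩)
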